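/- arXiv:1105.2149 — 5 statements merged into one kernel-verified Lean document; each statement's English description precedes it below -/
import Mathlib

section
/- Let E be a nonempty subset of a Banach space X and suppose T : E → P(E) satisfies condition (C). Then H(Tx, Ty) ≤ 2·dist(x, Tx) + ‖x − y‖ holds for all x, y ∈ E. -/
open Metric Bornology

/-- If `T : E → P(E)` (nonempty proximal bounded subsets of `E`) satisfies
condition (C), then `H(Tx,Ty) ≤ 2 dist(x,Tx) + ‖x-y‖` for all `x, y ∈ E`. -/
theorem condition_C_hausdorffDist_estimate
    {X : Type*} [NormedAddCommGroup X] [NormedSpace ℝ X] [CompleteSpace X]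
    (E : Set X) (hE : E.Nonempty) (T : X → Set X)
    (hT : ∀ x ∈ E, (T x).Nonempty ∧ IsBounded (T x) ∧ T x ⊆ E ∧
      ∀ p : X, ∃ q ∈ T x, ‖p - q‖ = infDist p (T x))
    (hC : ∀ x ∈ E, ∀ y ∈ E,
      (1 / 2) * infDist x (T x) ≤ ‖x - y‖ →
        hausdorffDist (T x) (T y) ≤ ‖x - y‖) :
    ∀ x ∈ E, ∀ y ∈ E,
      hausdorffDist (T x) (T y) ≤ 2 * infDist x (T x) + ‖x - y‖ := by
  intro x hx y hy
  obtain ⟨hTxne, hTxbd, hTxE, hTxprox⟩ := hT x hx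
  by_cases hcase : (1 / 2) * infDist x (T x) ≤ ‖x - y‖
  · have h := hC x hx y hy hcase
    have h0 : 0 ≤ infDist x (T x) := infDist_nonneg
    linarith
  push_neg at hcase
  -- pick a proximal point z ∈ T x
  obtain ⟨z, hzTx, hz⟩ := hTxprox x
  have hzE : z ∈ E := hTxE hzTx
  obtain ⟨hTzne, hTzbd, hTzE, _⟩ := hT z hzE
  obtain ⟨hTyne, hTybd, hTyE, _⟩ := hT y hy
  have hzdist : ‖x - z‖ = infDist x (T x) := hz
  have h0 : 0 ≤ infDist x (T x) := infDist_nonneg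
  -- condition (C) at (x, z)
  have hxz : (1 / 2) * infDist x (T x) ≤ ‖x - z‖ := by rw [hzdist]; linarith
  have hH1 : hausdorffDist (T x) (T z) ≤ ‖x - z‖ := hC x hx z hzE hxz
  have hfinxz : EMetric.hausdorffEdist (T x) (T z) ≠ ⊤ :=
    hausdorffEdist_ne_top_of_nonempty_of_bounded hTxne hTzne hTxbd hTzbd
  -- infDist z (T z) ≤ infDist x (T x)
  have hzz : infDist z (T z) ≤ infDist x (T x) := by
    have := infDist_le_infDist_add_hausdorffDist (x := z) hfinxz
    have hz0 : infDist z (T x) = 0 := infDist_zero_of_mem hzTx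
    rw [hz0, zero_add] at this
    calc infDist z (T z) ≤ hausdorffDist (T x) (T z) := this
      _ ≤ ‖x - z‖ := hH1
      _ = infDist x (T x) := hzdist
  -- condition (C) at (z, y)
  have hzy : (1 / 2) * infDist z (T z) ≤ ‖z - y‖ := by
    have h2 : ‖x - z‖ ≤ ‖x - y‖ + ‖z - y‖ := by
      calc ‖x - z‖ = ‖(x - y) + (y - z)‖ := by rw [sub_add_sub_cancel]
        _ ≤ ‖x - y‖ + ‖y - z‖ := norm_add_le _ _
        _ = ‖x - y‖ + ‖z - y‖ := by rw [norm_sub_rev y z]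
    have : infDist x (T x) - ‖x - y‖ ≤ ‖z - y‖ := by rw [← hzdist]; linarith
    linarith
  have hH2 : hausdorffDist (T z) (T y) ≤ ‖z - y‖ := hC z hzE y hy hzy
  have hfinzy : EMetric.hausdorffEdist (T z) (T y) ≠ ⊤ :=
    hausdorffEdist_ne_top_of_nonempty_of_bounded hTzne hTyne hTzbd hTybd
  have htri := hausdorffDist_triangle (u := T y) hfinxz
  have hnorm : ‖z - y‖ ≤ ‖z - x‖ + ‖x - y‖ := by
    have := norm_sub_le (z - x) (y - x)
    calc ‖z - y‖ = ‖(z - x) - (y - x)‖ := by rw [sub_sub_sub_cancel_right]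
      _ ≤ ‖z - x‖ + ‖y - x‖ := norm_sub_le _ _
      _ = ‖z - x‖ + ‖x - y‖ := by rw [norm_sub_rev y x]
  have hzx : ‖z - x‖ = infDist x (T x) := by rw [norm_sub_rev]; exact hzdist
  calc hausdorffDist (T x) (T y)
      ≤ hausdorffDist (T x) (T z) + hausdorffDist (T z) (T y) := htri
    _ ≤ ‖x - z‖ + ‖z - y‖ := add_le_add hH1 hH2
    _ ≤ infDist x (T x) + (‖z - x‖ + ‖x - y‖) := by rw [hzdist]; linarith
    _ = 2 * infDist x (T x) + ‖x - y‖ := by rw [hzx]; ring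
end

section
/- Let X be a uniformly convex Banach space and let B_r(0) = {x ∈ X : ‖x‖ ≤ r} for r > 0. Then there exists a continuous, strictly increasing, convex function φ : [0,∞) → [0,∞) with φ(0) = 0 such that ‖αx + βy + γz + ηw‖² ≤ α‖x‖² + β‖y‖² + γ‖z‖² + η‖w‖² − αβ·φ(‖x − y‖) for all x, y, z, w ∈ B_r(0) and all α, β, γ, η ∈ [0,1] with α + β + γ + η = 1. -/
open Metric Set

-- real-number core inequality
lemma ucfp_real_gap {a b n ε δ : ℝ} (ha : 0 ≤ a) (hab : a ≤ b) (hεab : ε ≤ a + b)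
    (hn0 : 0 ≤ n) (hn1 : n ≤ a + b) (hn2 : n ≤ (2 - δ) * b) (hδ0 : 0 < δ) (hδ1 : δ ≤ 1)
    (hε : 0 < ε) :
    ε ^ 2 * δ ^ 2 / 1024 ≤ (a ^ 2 + b ^ 2) / 2 - n ^ 2 / 4 := by
  rcases le_total (b - a) (ε * δ / 16) with h | h
  · nlinarith [mul_pos hε hδ0, sq_nonneg (b - a), mul_nonneg hn0 hδ0.le,
      mul_nonneg (mul_nonneg hε.le hδ0.le) (sub_nonneg.2 hab),
      mul_nonneg (mul_nonneg hδ0.le hδ0.le) (mul_nonneg hε.le hε.le),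
      mul_le_of_le_one_right (mul_nonneg hε.le hε.le) hδ1]
  · nlinarith [sq_nonneg (b - a), mul_pos hε hδ0, sq_nonneg (a + b - n)]

-- three-weight square convexity
lemma ucfp_sq3 {s γ η a b c : ℝ} (hs : 0 ≤ s) (hγ : 0 ≤ γ) (hη : 0 ≤ η)
    (ha : 0 ≤ a) (hb : 0 ≤ b) (hc : 0 ≤ c)
    (hsum : s + γ + η = 1) : (s*a + γ*b + η*c)^2 ≤ s*a^2 + γ*b^2 + η*c^2 := by
  nlinarith [mul_nonneg (mul_nonneg hs hγ) (sq_nonneg (a-b)),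
    mul_nonneg (mul_nonneg hγ hη) (sq_nonneg (b-c)),
    mul_nonneg (mul_nonneg hs hη) (sq_nonneg (a-c))]

lemma ucfp_gap_lb (X : Type*) [NormedAddCommGroup X] [NormedSpace ℝ X]
    [UniformConvexSpace X] {r ε : ℝ} (hr : 0 < r) (hε : 0 < ε) :
    ∃ c > 0, ∀ x y : X, ‖x‖ ≤ r → ‖y‖ ≤ r → ε ≤ ‖x - y‖ →
      c ≤ (‖x‖ ^ 2 + ‖y‖ ^ 2) / 2 - ‖x + y‖ ^ 2 / 4 := by
  obtain ⟨δ₀, hδ₀, h⟩ := exists_forall_closed_ball_dist_add_le_two_sub X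
    (div_pos hε hr)
  set δ := min δ₀ 1 with hδdef
  have hδ0 : 0 < δ := lt_min hδ₀ one_pos
  have hδ1 : δ ≤ 1 := min_le_right _ _
  refine ⟨ε ^ 2 * δ ^ 2 / 1024, by positivity, ?_⟩
  -- first a symmetric-in-roles helper assuming ‖x‖ ≤ ‖y‖
  have main : ∀ x y : X, ‖x‖ ≤ r → ‖y‖ ≤ r → ε ≤ ‖x - y‖ → ‖x‖ ≤ ‖y‖ →
      ε ^ 2 * δ ^ 2 / 1024 ≤ (‖x‖ ^ 2 + ‖y‖ ^ 2) / 2 - ‖x + y‖ ^ 2 / 4 := by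
    intro x y hx hy hxy hab
    set b := ‖y‖ with hbdef
    have hb0 : 0 < b := by
      rcases lt_or_ge 0 b with h' | h'
      · exact h'
      · exfalso
        have hx0 : ‖x‖ = 0 := le_antisymm (hab.trans h') (norm_nonneg x)
        have hy0 : b = 0 := le_antisymm h' (norm_nonneg y)
        have : ε ≤ 0 := by
          calc ε ≤ ‖x - y‖ := hxy
          _ ≤ ‖x‖ + ‖y‖ := norm_sub_le x y
          _ = 0 := by rw [hx0, ← hbdef, hy0]; ring
        linarith
    have hxb : ‖b⁻¹ • x‖ ≤ 1 := by
      rw [norm_smul, norm_inv, Real.norm_of_nonneg hb0.le]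
      rw [inv_mul_le_iff₀ hb0, mul_one]
      exact hab
    have hyb : ‖b⁻¹ • y‖ ≤ 1 := by
      rw [norm_smul, norm_inv, Real.norm_of_nonneg hb0.le]
      rw [inv_mul_le_iff₀ hb0, mul_one]
    have hsub : ε / r ≤ ‖b⁻¹ • x - b⁻¹ • y‖ := by
      rw [← smul_sub, norm_smul, norm_inv, Real.norm_of_nonneg hb0.le]
      calc ε / r ≤ ε / b := by
            apply div_le_div_of_nonneg_left hε.le hb0 (hy)
        _ ≤ ‖x - y‖ / b := by gcongr
        _ = b⁻¹ * ‖x - y‖ := by rw [div_eq_inv_mul]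
    have := h hxb hyb hsub
    have hsum : ‖x + y‖ ≤ (2 - δ) * b := by
      rw [← smul_add, norm_smul, norm_inv, Real.norm_of_nonneg hb0.le] at this
      have h2 : b⁻¹ * ‖x + y‖ ≤ 2 - δ := by
        calc b⁻¹ * ‖x + y‖ ≤ 2 - δ₀ := this
        _ ≤ 2 - δ := by have : δ ≤ δ₀ := min_le_left _ _; linarith
      calc ‖x + y‖ = b * (b⁻¹ * ‖x + y‖) := by field_simp
      _ ≤ b * (2 - δ) := by
          apply mul_le_mul_of_nonneg_left h2 hb0.le
      _ = (2 - δ) * b := mul_comm _ _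
    exact ucfp_real_gap (norm_nonneg x) hab (hxy.trans (norm_sub_le x y)) (norm_nonneg _)
      (norm_add_le x y) hsum hδ0 hδ1 hε
  intro x y hx hy hxy
  rcases le_total ‖x‖ ‖y‖ with hab | hab
  · exact main x y hx hy hxy hab
  · have := main y x hy hx (by rwa [norm_sub_rev]) hab
    calc ε ^ 2 * δ ^ 2 / 1024 ≤ (‖y‖ ^ 2 + ‖x‖ ^ 2) / 2 - ‖y + x‖ ^ 2 / 4 := this
    _ = (‖x‖ ^ 2 + ‖y‖ ^ 2) / 2 - ‖x + y‖ ^ 2 / 4 := by rw [add_comm y x]; ring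
noncomputable section

variable {X : Type*} [NormedAddCommGroup X] [NormedSpace ℝ X] [UniformConvexSpace X]

/-- midpoint gap of the squared norm -/
def ucfpGap (x y : X) : ℝ := (‖x‖ ^ 2 + ‖y‖ ^ 2) / 2 - ‖x + y‖ ^ 2 / 4

lemma ucfpGap_nonneg (x y : X) : 0 ≤ ucfpGap x y := by
  have h := norm_add_le x y
  have h2 : ‖x + y‖ ^ 2 ≤ (‖x‖ + ‖y‖) ^ 2 := by
    apply pow_le_pow_left₀ (norm_nonneg _) h
  unfold ucfpGap
  nlinarith [sq_nonneg (‖x‖ - ‖y‖)]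

lemma ucfpGap_comm (x y : X) : ucfpGap x y = ucfpGap y x := by
  unfold ucfpGap; rw [add_comm x y]; ring

/-- the set of gaps over pairs at distance at least `min t (2r)` in the `r`-ball -/
def ucfpSet (X : Type*) [NormedAddCommGroup X] (r t : ℝ) : Set ℝ :=
  {v | ∃ x y : X, ‖x‖ ≤ r ∧ ‖y‖ ≤ r ∧ min t (2 * r) ≤ ‖x - y‖ ∧ v = ucfpGap x y}

def ucfpG (X : Type*) [NormedAddCommGroup X] (r t : ℝ) : ℝ := sInf (ucfpSet X r t)

lemma ucfpSet_bddBelow (r t : ℝ) : BddBelow (ucfpSet X r t) := by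
  refine ⟨0, ?_⟩
  rintro v ⟨x, y, -, -, -, rfl⟩
  exact ucfpGap_nonneg x y

lemma ucfpSet_nonempty [Nontrivial X] {r : ℝ} (hr : 0 < r) (t : ℝ) :
    (ucfpSet X r t).Nonempty := by
  obtain ⟨u, hu⟩ := exists_norm_eq X hr.le
  refine ⟨ucfpGap u (-u), u, -u, hu.le, by rw [norm_neg]; exact hu.le, ?_, rfl⟩
  have h2 : u - -u = (2 : ℝ) • u := by
    rw [sub_neg_eq_add, two_smul]
  rw [h2, norm_smul, hu]
  simpa using min_le_right t (2 * r)

lemma ucfpG_nonneg [Nontrivial X] {r : ℝ} (hr : 0 < r) (t : ℝ) : 0 ≤ ucfpG X r t :=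
  le_csInf (ucfpSet_nonempty hr t) (by rintro v ⟨x, y, -, -, -, rfl⟩; exact ucfpGap_nonneg x y)

lemma ucfpG_mono [Nontrivial X] {r : ℝ} (hr : 0 < r) : Monotone (ucfpG X r) := by
  intro s t hst
  apply csInf_le_csInf (ucfpSet_bddBelow r s) (ucfpSet_nonempty hr t)
  rintro v ⟨x, y, hx, hy, hd, rfl⟩
  exact ⟨x, y, hx, hy, le_trans (min_le_min_right _ hst) hd, rfl⟩

lemma ucfpG_le {r : ℝ} (hr : 0 < r) {x y : X} (hx : ‖x‖ ≤ r) (hy : ‖y‖ ≤ r) :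
    ucfpG X r ‖x - y‖ ≤ ucfpGap x y :=
  csInf_le (ucfpSet_bddBelow r _) ⟨x, y, hx, hy, min_le_left _ _, rfl⟩

lemma ucfpG_pos [Nontrivial X] {r t : ℝ} (hr : 0 < r) (ht : 0 < t) : 0 < ucfpG X r t := by
  have hε : 0 < min t (2 * r) := lt_min ht (by linarith)
  obtain ⟨c, hc, h⟩ := ucfp_gap_lb X hr hε
  refine lt_of_lt_of_le hc (le_csInf (ucfpSet_nonempty hr t) ?_)
  rintro v ⟨x, y, hx, hy, hd, rfl⟩
  exact h x y hx hy hd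

end
noncomputable section
open MeasureTheory intervalIntegral

variable {X : Type*} [NormedAddCommGroup X] [NormedSpace ℝ X] [UniformConvexSpace X]

def ucfpPhi (X : Type*) [NormedAddCommGroup X] (r t : ℝ) : ℝ :=
  (∫ s in (0:ℝ)..t, ucfpG X r s) / (2 * r)

variable [Nontrivial X] {r : ℝ}

lemma ucfpG_integrable (hr : 0 < r) (a b : ℝ) :
    IntervalIntegrable (ucfpG X r) volume a b :=
  ((ucfpG_mono (X := X) hr).monotoneOn _).intervalIntegrable

lemma ucfpPhi_continuous (hr : 0 < r) : Continuous (ucfpPhi X r) :=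
  (intervalIntegral.continuous_primitive (ucfpG_integrable hr) 0).div_const _

lemma ucfp_int_lb (hr : 0 < r) {a b : ℝ} (hab : a ≤ b) :
    (b - a) * ucfpG X r a ≤ ∫ s in a..b, ucfpG X r s := by
  have h := integral_mono_on (μ := volume) hab (intervalIntegrable_const)
    (ucfpG_integrable hr a b) (fun x hx => ucfpG_mono (X := X) hr hx.1)
  simpa [smul_eq_mul] using h

lemma ucfp_int_ub (hr : 0 < r) {a b : ℝ} (hab : a ≤ b) :
    (∫ s in a..b, ucfpG X r s) ≤ (b - a) * ucfpG X r b := by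
  have h := integral_mono_on (μ := volume) hab (ucfpG_integrable hr a b)
    (intervalIntegrable_const) (fun x hx => ucfpG_mono (X := X) hr hx.2)
  simpa [smul_eq_mul] using h

lemma ucfpPhi_sub (hr : 0 < r) (a b : ℝ) :
    ucfpPhi X r b - ucfpPhi X r a = (∫ s in a..b, ucfpG X r s) / (2 * r) := by
  unfold ucfpPhi
  rw [div_sub_div_same, ← integral_add_adjacent_intervals (ucfpG_integrable (X := X) hr 0 a)
    (ucfpG_integrable (X := X) hr a b), add_sub_cancel_left]

lemma ucfpPhi_zero : ucfpPhi X r 0 = 0 := by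
  unfold ucfpPhi; rw [integral_same, zero_div]

lemma ucfpPhi_strictMono (hr : 0 < r) : StrictMonoOn (ucfpPhi X r) (Set.Ici 0) := by
  intro a ha b hb hab
  have hmid : a < (a + b) / 2 := by linarith
  have hmid' : (a + b) / 2 < b := by linarith
  have hmidpos : 0 < (a + b) / 2 := by
    have : (0:ℝ) ≤ a := ha
    linarith
  have h1 : (0:ℝ) ≤ ∫ s in a..(a+b)/2, ucfpG X r s := by
    have := ucfp_int_lb (X := X) hr hmid.le
    nlinarith [ucfpG_nonneg (X := X) hr a]
  have h2 : (0:ℝ) < ∫ s in ((a+b)/2)..b, ucfpG X r s := by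
    have := ucfp_int_lb (X := X) hr hmid'.le
    nlinarith [ucfpG_pos (X := X) hr hmidpos]
  have hsplit := integral_add_adjacent_intervals (ucfpG_integrable (X := X) hr a ((a+b)/2))
    (ucfpG_integrable (X := X) hr ((a+b)/2) b)
  have hI : (0:ℝ) < ∫ s in a..b, ucfpG X r s := by rw [← hsplit]; linarith
  have hs := ucfpPhi_sub (X := X) hr a b
  have hpos : (0:ℝ) < (∫ s in a..b, ucfpG X r s) / (2 * r) := by positivity
  linarith

lemma ucfpPhi_nonneg (hr : 0 < r) {t : ℝ} (ht : 0 ≤ t) : 0 ≤ ucfpPhi X r t := by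
  have h := ucfp_int_lb (X := X) hr ht
  have h0 : (0:ℝ) ≤ (t - 0) * ucfpG X r 0 :=
    mul_nonneg (by linarith) (ucfpG_nonneg hr 0)
  unfold ucfpPhi
  have : (0:ℝ) ≤ ∫ s in (0:ℝ)..t, ucfpG X r s := le_trans h0 h
  positivity

lemma ucfpPhi_convex (hr : 0 < r) : ConvexOn ℝ (Set.Ici 0) (ucfpPhi X r) := by
  apply LinearOrder.convexOn_of_lt (convex_Ici 0)
  intro x hx y hy hxy a b ha hb hab
  simp only [smul_eq_mul]
  set c := a * x + b * y with hcdef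
  have hcx : c - x = b * (y - x) := by rw [hcdef]; linear_combination x * hab
  have hyc : y - c = a * (y - x) := by rw [hcdef]; linear_combination (-y) * hab
  have hxc : x ≤ c := by nlinarith [mul_nonneg hb.le (sub_nonneg.2 hxy.le)]
  have hcy : c ≤ y := by nlinarith [mul_nonneg ha.le (sub_nonneg.2 hxy.le)]
  set D := ucfpG X r c / (2 * r) with hDdef
  have h1 : ucfpPhi X r c - ucfpPhi X r x ≤ (c - x) * D := by
    rw [ucfpPhi_sub (X := X) hr, hDdef, ← mul_div_assoc]
    gcongr
    exact ucfp_int_ub hr hxc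
  have h2 : (y - c) * D ≤ ucfpPhi X r y - ucfpPhi X r c := by
    rw [ucfpPhi_sub (X := X) hr, hDdef, ← mul_div_assoc]
    gcongr
    exact ucfp_int_lb hr hcy
  rw [hcx] at h1
  rw [hyc] at h2
  have h1' := mul_le_mul_of_nonneg_left h1 ha.le
  have h2' := mul_le_mul_of_nonneg_left h2 hb.le
  have h3 : a * ucfpPhi X r c + b * ucfpPhi X r c = ucfpPhi X r c := by
    rw [← add_mul, hab, one_mul]
  linarith [h1', h2', h3]
end
noncomputable section
open Metric Set MeasureTheory intervalIntegral

variable {X : Type*} [NormedAddCommGroup X] [NormedSpace ℝ X] [UniformConvexSpace X]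
  [Nontrivial X] {r : ℝ}

lemma ucfpPhi_le_g (hr : 0 < r) {t : ℝ} (ht : 0 ≤ t) (ht2 : t ≤ 2 * r) :
    ucfpPhi X r t ≤ ucfpG X r t := by
  have h := ucfp_int_ub (X := X) hr ht
  have hg := ucfpG_nonneg (X := X) hr t
  unfold ucfpPhi
  rw [div_le_iff₀ (by positivity)]
  calc (∫ s in (0:ℝ)..t, ucfpG X r s) ≤ (t - 0) * ucfpG X r t := h
  _ ≤ (2 * r) * ucfpG X r t := by nlinarith
  _ = ucfpG X r t * (2 * r) := mul_comm _ _

lemma ucfp_two_point (hr : 0 < r) {p q : X} (hp : ‖p‖ ≤ r) (hq : ‖q‖ ≤ r)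
    {a b : ℝ} (ha : 0 ≤ a) (hb : 0 ≤ b) (hab : a + b = 1) :
    ‖a • p + b • q‖ ^ 2 ≤ a * ‖p‖ ^ 2 + b * ‖q‖ ^ 2 - a * b * ucfpPhi X r ‖p - q‖ := by
  have half : ∀ p q : X, ‖p‖ ≤ r → ‖q‖ ≤ r → ∀ a b : ℝ, 0 ≤ a → a ≤ b → a + b = 1 →
      ‖a • p + b • q‖ ^ 2 ≤ a * ‖p‖ ^ 2 + b * ‖q‖ ^ 2 - 2 * a * ucfpGap p q := by
    intro p q hp hq a b ha hab' habsum
    set m : X := (2:ℝ)⁻¹ • (p + q) with hmdef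
    have hrep : a • p + b • q = (2*a) • m + (b-a) • q := by
      rw [hmdef, smul_smul, smul_add]
      module
    have e1 : ‖(2*a) • m‖ = (2*a) * ‖m‖ := by
      rw [norm_smul, Real.norm_of_nonneg (by linarith : (0:ℝ) ≤ 2*a)]
    have e2 : ‖(b-a) • q‖ = (b-a) * ‖q‖ := by
      rw [norm_smul, Real.norm_of_nonneg (by linarith : (0:ℝ) ≤ b-a)]
    have hnorm : ‖a • p + b • q‖ ≤ (2*a)*‖m‖ + (b-a)*‖q‖ := by
      rw [hrep]
      exact (norm_add_le _ _).trans (by rw [e1, e2])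
    have hsq3 := ucfp_sq3 (s := 2*a) (γ := b-a) (η := 0) (a := ‖m‖) (b := ‖q‖) (c := 0)
      (by linarith) (by linarith) le_rfl (norm_nonneg _) (norm_nonneg _) le_rfl
      (by linarith)
    have hsq : ‖a • p + b • q‖ ^ 2 ≤ (2*a)*‖m‖^2 + (b-a)*‖q‖^2 := by
      calc ‖a • p + b • q‖ ^ 2 ≤ ((2*a)*‖m‖ + (b-a)*‖q‖) ^ 2 := by
            apply pow_le_pow_left₀ (norm_nonneg _) hnorm
      _ ≤ (2*a)*‖m‖^2 + (b-a)*‖q‖^2 := by nlinarith [hsq3]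
    have hh : ‖m‖^2 = ‖p + q‖^2 / 4 := by
      rw [hmdef, norm_smul]
      rw [norm_inv, Real.norm_ofNat]
      ring
    unfold ucfpGap
    rw [hh] at hsq
    linarith
  have hd0 : (0:ℝ) ≤ ‖p - q‖ := norm_nonneg _
  have hd2 : ‖p - q‖ ≤ 2 * r := by
    calc ‖p - q‖ ≤ ‖p‖ + ‖q‖ := norm_sub_le p q
    _ ≤ 2 * r := by linarith
  have hphig : ucfpPhi X r ‖p - q‖ ≤ ucfpGap p q :=
    (ucfpPhi_le_g hr hd0 hd2).trans (ucfpG_le hr hp hq)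
  have hphinn : 0 ≤ ucfpPhi X r ‖p - q‖ := ucfpPhi_nonneg hr hd0
  rcases le_total a b with hab' | hab'
  · have h := half p q hp hq a b ha hab' hab
    have hb1 : b ≤ 1 := by linarith
    nlinarith [mul_le_mul_of_nonneg_left hphig ha, mul_nonneg ha hphinn,
      mul_nonneg ha (ucfpGap_nonneg p q)]
  · have h := half q p hq hp b a hb hab' (by linarith)
    rw [add_comm (b • q) (a • p)] at h
    rw [ucfpGap_comm q p] at h
    have ha1 : a ≤ 1 := by linarith
    nlinarith [mul_le_mul_of_nonneg_left hphig hb, mul_nonneg hb hphinn,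
      mul_nonneg hb (ucfpGap_nonneg p q)]
end
/-- In a uniformly convex Banach space, for each `r > 0` there is a continuous,
strictly increasing, convex function `φ : [0,∞) → [0,∞)` with `φ 0 = 0` such
that the four-point convexity inequality holds on the ball of radius `r`. -/
theorem uniformly_convex_four_point_inequality
    {X : Type*} [NormedAddCommGroup X] [NormedSpace ℝ X] [CompleteSpace X]
    [UniformConvexSpace X] (r : ℝ) (hr : 0 < r) :
    ∃ φ : ℝ → ℝ, ContinuousOn φ (Ici 0) ∧ StrictMonoOn φ (Ici 0) ∧
      ConvexOn ℝ (Ici 0) φ ∧ (∀ t ∈ Ici (0 : ℝ), 0 ≤ φ t) ∧ φ 0 = 0 ∧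
      ∀ x ∈ closedBall (0 : X) r, ∀ y ∈ closedBall (0 : X) r,
        ∀ z ∈ closedBall (0 : X) r, ∀ w ∈ closedBall (0 : X) r,
          ∀ α ∈ Icc (0 : ℝ) 1, ∀ β ∈ Icc (0 : ℝ) 1, ∀ γ ∈ Icc (0 : ℝ) 1,
            ∀ η ∈ Icc (0 : ℝ) 1, α + β + γ + η = 1 →
              ‖α • x + β • y + γ • z + η • w‖ ^ 2 ≤
                α * ‖x‖ ^ 2 + β * ‖y‖ ^ 2 + γ * ‖z‖ ^ 2 + η * ‖w‖ ^ 2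
                  - α * β * φ ‖x - y‖ := by
  rcases subsingleton_or_nontrivial X with hsub | hnt
  · refine ⟨fun t => t, continuousOn_id, fun a _ b _ h => h, convexOn_id (convex_Ici 0),
      fun t ht => ht, rfl, ?_⟩
    intro x _ y _ z _ w _ α _ β hβ _ _ _ _ _
    have hx0 : x = 0 := Subsingleton.elim x 0
    have hy0 : y = 0 := Subsingleton.elim y 0
    have hz0 : z = 0 := Subsingleton.elim z 0
    have hw0 : w = 0 := Subsingleton.elim w 0
    subst hx0 hy0 hz0 hw0
    simp
  · refine ⟨ucfpPhi X r, (ucfpPhi_continuous hr).continuousOn, ucfpPhi_strictMono hr,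
      ucfpPhi_convex hr, fun t ht => ucfpPhi_nonneg hr ht, ucfpPhi_zero, ?_⟩
    intro x hx y hy z hz w hw α hα β hβ γ hγ η hη hsum
    rw [mem_closedBall_zero_iff] at hx hy hz hw
    set Φ : ℝ := ucfpPhi X r ‖x - y‖ with hΦdef
    have hΦnn : 0 ≤ Φ := ucfpPhi_nonneg hr (norm_nonneg _)
    by_cases hs0 : α + β = 0
    · have hα0 : α = 0 := by linarith [hα.1, hβ.1]
      have hβ0 : β = 0 := by linarith [hα.1, hβ.1]
      subst hα0 hβ0
      simp only [zero_smul, zero_add, zero_mul, sub_zero]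
      have hγη : γ + η = 1 := by linarith
      have h := ucfp_two_point hr hz hw hγ.1 hη.1 hγη
      nlinarith [mul_nonneg (mul_nonneg hγ.1 hη.1)
        (ucfpPhi_nonneg (X := X) hr (norm_nonneg (z - w)))]
    · have hspos : 0 < α + β := lt_of_le_of_ne (by linarith [hα.1, hβ.1]) (Ne.symm hs0)
      set s := α + β with hsdef
      set p : X := (α/s) • x + (β/s) • y with hpdef
      have hsum2 : α/s + β/s = 1 := by field_simp; exact hsdef.symm
      have hαs : 0 ≤ α/s := div_nonneg hα.1 hspos.le
      have hβs : 0 ≤ β/s := div_nonneg hβ.1 hspos.le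
      have hp : ‖p‖ ≤ r := by
        calc ‖p‖ ≤ ‖(α/s) • x‖ + ‖(β/s) • y‖ := norm_add_le _ _
        _ = (α/s) * ‖x‖ + (β/s) * ‖y‖ := by
            rw [norm_smul, norm_smul, Real.norm_of_nonneg hαs, Real.norm_of_nonneg hβs]
        _ ≤ (α/s) * r + (β/s) * r := by
            gcongr
        _ = r := by rw [← add_mul, hsum2, one_mul]
      have key2 := ucfp_two_point hr hx hy hαs hβs hsum2
      have hsp : s • p = α • x + β • y := by
        rw [hpdef, smul_add, smul_smul, smul_smul]
        have e1 : s * (α/s) = α := by field_simp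
        have e2 : s * (β/s) = β := by field_simp
        rw [e1, e2]
      have hrep : α • x + β • y + γ • z + η • w = s • p + γ • z + η • w := by
        rw [hsp]
      have es : ‖s • p‖ = s * ‖p‖ := by
        rw [norm_smul, Real.norm_of_nonneg hspos.le]
      have eγ : ‖γ • z‖ = γ * ‖z‖ := by
        rw [norm_smul, Real.norm_of_nonneg hγ.1]
      have eη : ‖η • w‖ = η * ‖w‖ := by
        rw [norm_smul, Real.norm_of_nonneg hη.1]
      have hnorm3 : ‖α • x + β • y + γ • z + η • w‖ ≤ s * ‖p‖ + γ * ‖z‖ + η * ‖w‖ := by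
        rw [hrep]
        calc ‖s • p + γ • z + η • w‖ ≤ ‖s • p + γ • z‖ + ‖η • w‖ := norm_add_le _ _
        _ ≤ ‖s • p‖ + ‖γ • z‖ + ‖η • w‖ := by
            have := norm_add_le (s • p) (γ • z)
            linarith
        _ = s * ‖p‖ + γ * ‖z‖ + η * ‖w‖ := by rw [es, eγ, eη]
      have hsq3 := ucfp_sq3 (s := s) (γ := γ) (η := η) (a := ‖p‖) (b := ‖z‖) (c := ‖w‖)
        hspos.le hγ.1 hη.1 (norm_nonneg _) (norm_nonneg _) (norm_nonneg _) (by linarith)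
      have hsq : ‖α • x + β • y + γ • z + η • w‖ ^ 2 ≤ s * ‖p‖^2 + γ * ‖z‖^2 + η * ‖w‖^2 := by
        calc ‖α • x + β • y + γ • z + η • w‖ ^ 2 ≤ (s * ‖p‖ + γ * ‖z‖ + η * ‖w‖) ^ 2 :=
              pow_le_pow_left₀ (norm_nonneg _) hnorm3 2
        _ ≤ s * ‖p‖^2 + γ * ‖z‖^2 + η * ‖w‖^2 := hsq3
      have skey : s * ‖p‖^2 ≤ α * ‖x‖^2 + β * ‖y‖^2 - (α * β / s) * Φ := by
        have h := mul_le_mul_of_nonneg_left key2 hspos.le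
        have e : s * ((α/s) * ‖x‖^2 + (β/s) * ‖y‖^2 - (α/s) * (β/s) * Φ)
            = α * ‖x‖^2 + β * ‖y‖^2 - (α * β / s) * Φ := by
          field_simp
        rw [e] at h
        rw [show ((α/s) • x + (β/s) • y) = p from hpdef.symm] at h
        exact h
      have hs1 : s ≤ 1 := by linarith [hγ.1, hη.1]
      have hcmp : α * β * Φ ≤ (α * β / s) * Φ := by
        have h1 : α * β ≤ α * β / s := by
          rw [le_div_iff₀ hspos]
          nlinarith [mul_nonneg hα.1 hβ.1]
        exact mul_le_mul_of_nonneg_right h1 hΦnn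
      clear_value Φ s p
      linarith
end

section
/- Let E be a nonempty convex subset of a Banach space X, let T_i : E → CB(E), i = 1,2,3, satisfy condition (C) with F = ∩_{i=1}^3 F(T_i) ≠ ∅ and T_i(p) = {p} for each p ∈ F, and let {x_n} be generated by the iterative process (A) with Σ b_n < ∞, Σ e_n < ∞ and Σ γ_n < ∞. Then for every p ∈ F, the limit lim_{n→∞} ‖x_n − p‖ exists. -/
open Metric Bornology Filter

private lemma conv3 {X : Type*} [AddCommGroup X] [Module ℝ X] {E : Set X} (hE : Convex ℝ E)
    {x y z : X} (hx : x ∈ E) (hy : y ∈ E) (hz : z ∈ E)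
    {t1 t2 t3 : ℝ} (h1 : 0 ≤ t1) (h2 : 0 ≤ t2) (h3 : 0 ≤ t3) (hs : t1 + t2 + t3 = 1) :
    t1 • x + t2 • y + t3 • z ∈ E := by
  have h := hE.sum_mem (t := (Finset.univ : Finset (Fin 3))) (w := ![t1, t2, t3])
    (z := ![x, y, z]) (by intro i _; fin_cases i <;> assumption)
    (by simp [Fin.sum_univ_three, hs]) (by intro i _; fin_cases i <;> assumption)
  simpa [Fin.sum_univ_three] using h

private lemma conv4 {X : Type*} [AddCommGroup X] [Module ℝ X] {E : Set X} (hE : Convex ℝ E)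
    {x y z w : X} (hx : x ∈ E) (hy : y ∈ E) (hz : z ∈ E) (hw : w ∈ E)
    {t1 t2 t3 t4 : ℝ} (h1 : 0 ≤ t1) (h2 : 0 ≤ t2) (h3 : 0 ≤ t3) (h4 : 0 ≤ t4)
    (hs : t1 + t2 + t3 + t4 = 1) :
    t1 • x + t2 • y + t3 • z + t4 • w ∈ E := by
  have h := hE.sum_mem (t := (Finset.univ : Finset (Fin 4))) (w := ![t1, t2, t3, t4])
    (z := ![x, y, z, w]) (by intro i _; fin_cases i <;> assumption)
    (by simp [Fin.sum_univ_four, hs]) (by intro i _; fin_cases i <;> assumption)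
  simpa [Fin.sum_univ_four, add_assoc] using h

private lemma norm3 {X : Type*} [NormedAddCommGroup X] [NormedSpace ℝ X]
    (p x y z : X) {t1 t2 t3 : ℝ} (h1 : 0 ≤ t1) (h2 : 0 ≤ t2) (h3 : 0 ≤ t3)
    (hs : t1 + t2 + t3 = 1) :
    ‖t1 • x + t2 • y + t3 • z - p‖ ≤ t1 * ‖x - p‖ + t2 * ‖y - p‖ + t3 * ‖z - p‖ := by
  have heq : t1 • x + t2 • y + t3 • z - p
      = t1 • (x - p) + t2 • (y - p) + t3 • (z - p) := by
    have : p = (t1 + t2 + t3) • p := by rw [hs, one_smul]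
    rw [smul_sub, smul_sub, smul_sub]
    nth_rewrite 1 [this]
    module
  rw [heq]
  calc ‖t1 • (x - p) + t2 • (y - p) + t3 • (z - p)‖
      ≤ ‖t1 • (x - p) + t2 • (y - p)‖ + ‖t3 • (z - p)‖ := norm_add_le _ _
    _ ≤ ‖t1 • (x - p)‖ + ‖t2 • (y - p)‖ + ‖t3 • (z - p)‖ := by
        gcongr; exact norm_add_le _ _
    _ = t1 * ‖x - p‖ + t2 * ‖y - p‖ + t3 * ‖z - p‖ := by
        simp [norm_smul, abs_of_nonneg, h1, h2, h3]

private lemma norm4 {X : Type*} [NormedAddCommGroup X] [NormedSpace ℝ X]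
    (p x y z w : X) {t1 t2 t3 t4 : ℝ} (h1 : 0 ≤ t1) (h2 : 0 ≤ t2) (h3 : 0 ≤ t3) (h4 : 0 ≤ t4)
    (hs : t1 + t2 + t3 + t4 = 1) :
    ‖t1 • x + t2 • y + t3 • z + t4 • w - p‖
      ≤ t1 * ‖x - p‖ + t2 * ‖y - p‖ + t3 * ‖z - p‖ + t4 * ‖w - p‖ := by
  have heq : t1 • x + t2 • y + t3 • z + t4 • w - p
      = t1 • (x - p) + t2 • (y - p) + t3 • (z - p) + t4 • (w - p) := by
    have : p = (t1 + t2 + t3 + t4) • p := by rw [hs, one_smul]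
    rw [smul_sub, smul_sub, smul_sub, smul_sub]
    nth_rewrite 1 [this]
    module
  rw [heq]
  calc ‖t1 • (x - p) + t2 • (y - p) + t3 • (z - p) + t4 • (w - p)‖
      ≤ ‖t1 • (x - p) + t2 • (y - p) + t3 • (z - p)‖ + ‖t4 • (w - p)‖ := norm_add_le _ _
    _ ≤ ‖t1 • (x - p)‖ + ‖t2 • (y - p)‖ + ‖t3 • (z - p)‖ + ‖t4 • (w - p)‖ := by
        gcongr
        calc ‖t1 • (x - p) + t2 • (y - p) + t3 • (z - p)‖
            ≤ ‖t1 • (x - p) + t2 • (y - p)‖ + ‖t3 • (z - p)‖ := norm_add_le _ _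
          _ ≤ ‖t1 • (x - p)‖ + ‖t2 • (y - p)‖ + ‖t3 • (z - p)‖ := by
              gcongr; exact norm_add_le _ _
    _ = t1 * ‖x - p‖ + t2 * ‖y - p‖ + t3 * ‖z - p‖ + t4 * ‖w - p‖ := by
        simp [norm_smul, abs_of_nonneg, h1, h2, h3, h4]

private lemma key_contract {X : Type*} [NormedAddCommGroup X] (T : X → Set X) (E : Set X)
    (hT : ∀ q ∈ E, (T q).Nonempty ∧ IsClosed (T q) ∧ IsBounded (T q) ∧ T q ⊆ E)
    (hC : ∀ p ∈ E, ∀ q ∈ E,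
      (1 / 2) * infDist p (T p) ≤ ‖p - q‖ → hausdorffDist (T p) (T q) ≤ ‖p - q‖)
    (p : X) (hpE : p ∈ E) (hTp : T p = {p})
    (q : X) (hqE : q ∈ E) (t : X) (ht : t ∈ T q) : ‖t - p‖ ≤ ‖q - p‖ := by
  have hinf : infDist p (T p) = 0 := by rw [hTp, infDist_singleton, dist_self]
  have hH : hausdorffDist (T p) (T q) ≤ ‖p - q‖ :=
    hC p hpE q hqE (by rw [hinf]; simpa using norm_nonneg (p - q))
  have hne : EMetric.hausdorffEdist (T p) (T q) ≠ ⊤ :=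
    hausdorffEdist_ne_top_of_nonempty_of_bounded
      (by rw [hTp]; exact Set.singleton_nonempty p) (hT q hqE).1
      (by rw [hTp]; exact isBounded_singleton) (hT q hqE).2.2.1
  have h1 : infDist t (T p) ≤ hausdorffDist (T q) (T p) :=
    infDist_le_hausdorffDist_of_mem ht (by rw [EMetric.hausdorffEdist_comm]; exact hne)
  rw [hTp, infDist_singleton, hausdorffDist_comm] at h1
  rw [← hTp] at h1
  calc ‖t - p‖ = dist t p := (dist_eq_norm t p).symm
    _ ≤ hausdorffDist (T p) (T q) := h1
    _ ≤ ‖p - q‖ := hH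
    _ = ‖q - p‖ := norm_sub_rev p q

private lemma limit_of_quasi (d εs : ℕ → ℝ) (hd : ∀ n, 0 ≤ d n)
    (hε : Summable εs) (hε0 : ∀ n, 0 ≤ εs n)
    (hrec : ∀ n, 1 ≤ n → d (n + 1) ≤ d n + εs n) :
    ∃ l, Tendsto d atTop (nhds l) := by
  set tail : ℕ → ℝ := fun n => ∑' k, εs (k + n) with htail
  have hsumm : ∀ m : ℕ, Summable (fun k => εs (k + m)) := fun m => (summable_nat_add_iff m).2 hε
  have htail0 : ∀ n, 0 ≤ tail n := fun n => tsum_nonneg fun k => hε0 _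
  have htailrec : ∀ n, tail n = εs n + tail (n + 1) := by
    intro n
    have h := Summable.tsum_eq_zero_add (hsumm n)
    simpa [htail, Nat.add_comm, Nat.add_assoc, Nat.add_left_comm] using h
  set g : ℕ → ℝ := fun n => d (n + 1) + tail (n + 1) with hg
  have hanti : Antitone g := by
    apply antitone_nat_of_succ_le
    intro n
    have h1 := hrec (n + 1) (by omega)
    have h2 := htailrec (n + 1)
    simp only [hg]
    linarith
  have hbdd : BddBelow (Set.range g) := by
    refine ⟨0, ?_⟩
    rintro _ ⟨n, rfl⟩
    exact add_nonneg (hd _) (htail0 _)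
  have hgl : Tendsto g atTop (nhds (⨅ i, g i)) := tendsto_atTop_ciInf hanti hbdd
  have htailto : Tendsto (fun n => tail (n + 1)) atTop (nhds 0) := by
    have h := tendsto_sum_nat_add εs
    exact h.comp (tendsto_add_atTop_nat 1)
  refine ⟨⨅ i, g i, ?_⟩
  have hd1 : Tendsto (fun n => d (n + 1)) atTop (nhds (⨅ i, g i)) := by
    have := hgl.sub htailto
    simpa [hg] using this
  exact (tendsto_add_atTop_iff_nat 1).1 hd1

/-- In the proof of Theorem 3.2: for every common fixed point p, the limit of
‖x_n - p‖ exists. -/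
theorem three_step_norm_limit_exists
    {X : Type*} [NormedAddCommGroup X] [NormedSpace ℝ X] [CompleteSpace X]
    (E : Set X) (hEne : E.Nonempty) (hEcv : Convex ℝ E)
    (T1 T2 T3 : X → Set X)
    (hT1 : ∀ p ∈ E, (T1 p).Nonempty ∧ IsClosed (T1 p) ∧ IsBounded (T1 p) ∧ T1 p ⊆ E)
    (hT2 : ∀ p ∈ E, (T2 p).Nonempty ∧ IsClosed (T2 p) ∧ IsBounded (T2 p) ∧ T2 p ⊆ E)
    (hT3 : ∀ p ∈ E, (T3 p).Nonempty ∧ IsClosed (T3 p) ∧ IsBounded (T3 p) ∧ T3 p ⊆ E)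
    (hC1 : ∀ p ∈ E, ∀ q ∈ E,
      (1 / 2) * infDist p (T1 p) ≤ ‖p - q‖ → hausdorffDist (T1 p) (T1 q) ≤ ‖p - q‖)
    (hC2 : ∀ p ∈ E, ∀ q ∈ E,
      (1 / 2) * infDist p (T2 p) ≤ ‖p - q‖ → hausdorffDist (T2 p) (T2 q) ≤ ‖p - q‖)
    (hC3 : ∀ p ∈ E, ∀ q ∈ E,
      (1 / 2) * infDist p (T3 p) ≤ ‖p - q‖ → hausdorffDist (T3 p) (T3 q) ≤ ‖p - q‖)
    (F : Set X) (hF : F = {p | p ∈ E ∧ p ∈ T1 p ∧ p ∈ T2 p ∧ p ∈ T3 p})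
    (hFne : F.Nonempty)
    (hFsingle : ∀ p ∈ F, T1 p = {p} ∧ T2 p = {p} ∧ T3 p = {p})
    (a b c d e al bt gm : ℕ → ℝ)
    (ha : ∀ n, a n ∈ Set.Icc (0 : ℝ) 1) (hb : ∀ n, b n ∈ Set.Icc (0 : ℝ) 1)
    (hc : ∀ n, c n ∈ Set.Icc (0 : ℝ) 1) (hd : ∀ n, d n ∈ Set.Icc (0 : ℝ) 1)
    (he : ∀ n, e n ∈ Set.Icc (0 : ℝ) 1)
    (hal : ∀ n, al n ∈ Set.Icc (0 : ℝ) 1) (hbt : ∀ n, bt n ∈ Set.Icc (0 : ℝ) 1)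
    (hgm : ∀ n, gm n ∈ Set.Icc (0 : ℝ) 1)
    (hab : ∀ n, a n + b n ≤ 1)
    (hcde : ∀ n, c n + d n + e n ≤ 1)
    (habg : ∀ n, al n + bt n + gm n ≤ 1)
    (hbs : Summable b) (hes : Summable e) (hgms : Summable gm)
    (x w y z u u2 v v2 s s2 s3 : ℕ → X)
    (hx1 : x 1 ∈ E)
    (hsE : ∀ n, s n ∈ E) (hs2E : ∀ n, s2 n ∈ E) (hs3E : ∀ n, s3 n ∈ E)
    (hsbd : IsBounded (Set.range s)) (hs2bd : IsBounded (Set.range s2))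
    (hs3bd : IsBounded (Set.range s3))
    (hz : ∀ n, z n ∈ T1 (x n)) (hu2 : ∀ n, u2 n ∈ T1 (x n))
    (hu : ∀ n, u n ∈ T2 (w n)) (hv2 : ∀ n, v2 n ∈ T2 (w n))
    (hv : ∀ n, v n ∈ T3 (y n))
    (hw : ∀ n, w n = (1 - a n - b n) • x n + a n • z n + b n • s n)
    (hy : ∀ n, y n = (1 - c n - d n - e n) • x n + c n • u n + d n • u2 n + e n • s2 n)
    (hx : ∀ n, x (n + 1) =
      (1 - al n - bt n - gm n) • x n + al n • v n + bt n • v2 n + gm n • s3 n) :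
    ∀ p ∈ F, ∃ l : ℝ, Tendsto (fun n => ‖x n - p‖) atTop (nhds l) := by
  intro p hp
  rw [hF] at hp
  obtain ⟨hpE, hp1, hp2, hp3⟩ := hp
  obtain ⟨hTp1, hTp2, hTp3⟩ := hFsingle p (by rw [hF]; exact ⟨hpE, hp1, hp2, hp3⟩)
  have key1 := key_contract T1 E hT1 hC1 p hpE hTp1
  have key2 := key_contract T2 E hT2 hC2 p hpE hTp2
  have key3 := key_contract T3 E hT3 hC3 p hpE hTp3
  -- bounds on the bounded sequences
  obtain ⟨r1, hr1⟩ := hsbd.subset_closedBall p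
  obtain ⟨r2, hr2⟩ := hs2bd.subset_closedBall p
  obtain ⟨r3, hr3⟩ := hs3bd.subset_closedBall p
  set M : ℝ := max 0 (max r1 (max r2 r3)) with hM
  have hM0 : 0 ≤ M := le_max_left _ _
  have hsM : ∀ n, ‖s n - p‖ ≤ M := by
    intro n
    have := hr1 (Set.mem_range_self n)
    rw [mem_closedBall, dist_eq_norm] at this
    exact this.trans (le_max_of_le_right (le_max_of_le_left le_rfl))
  have hs2M : ∀ n, ‖s2 n - p‖ ≤ M := by
    intro n
    have := hr2 (Set.mem_range_self n)
    rw [mem_closedBall, dist_eq_norm] at this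
    exact this.trans (le_max_of_le_right (le_max_of_le_right (le_max_of_le_left le_rfl)))
  have hs3M : ∀ n, ‖s3 n - p‖ ≤ M := by
    intro n
    have := hr3 (Set.mem_range_self n)
    rw [mem_closedBall, dist_eq_norm] at this
    exact this.trans (le_max_of_le_right (le_max_of_le_right (le_max_of_le_right le_rfl)))
  -- memberships
  have hwE : ∀ n, x n ∈ E → w n ∈ E := by
    intro n hxn
    rw [hw n]
    exact conv3 hEcv hxn ((hT1 (x n) hxn).2.2.2 (hz n)) (hsE n)
      (by linarith [(ha n).2, (hb n).2, hab n]) (ha n).1 (hb n).1 (by ring)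
  have hyE : ∀ n, x n ∈ E → y n ∈ E := by
    intro n hxn
    have hwn := hwE n hxn
    rw [hy n]
    exact conv4 hEcv hxn ((hT2 (w n) hwn).2.2.2 (hu n)) ((hT1 (x n) hxn).2.2.2 (hu2 n))
      (hs2E n) (by linarith [hcde n]) (hc n).1 (hd n).1 (he n).1 (by ring)
  have hmem : ∀ n, 1 ≤ n → x n ∈ E := by
    intro n hn
    induction n with
    | zero => omega
    | succ m ih =>
      rcases Nat.eq_zero_or_pos m with hm | hm
      · subst hm; exact hx1
      · have hxm := ih hm
        have hyn := hyE m hxm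
        have hwn := hwE m hxm
        rw [hx m]
        exact conv4 hEcv hxm ((hT3 (y m) hyn).2.2.2 (hv m)) ((hT2 (w m) hwn).2.2.2 (hv2 m))
          (hs3E m) (by linarith [habg m]) (hal m).1 (hbt m).1 (hgm m).1 (by ring)
  -- the quasi-monotonicity estimate
  set εs : ℕ → ℝ := fun n => M * (2 * b n + e n + gm n) with hεs
  have hεsum : Summable εs := by
    have : Summable (fun n => 2 * b n + e n + gm n) := ((hbs.mul_left 2).add hes).add hgms
    simpa [hεs] using this.mul_left M
  have hε0 : ∀ n, 0 ≤ εs n := by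
    intro n
    have := (hb n).1; have := (he n).1; have := (hgm n).1
    simp only [hεs]
    positivity
  have hrec : ∀ n, 1 ≤ n → ‖x (n + 1) - p‖ ≤ ‖x n - p‖ + εs n := by
    intro n hn
    have hxn := hmem n hn
    have hwn := hwE n hxn
    have hyn := hyE n hxn
    have ha0 := (ha n).1; have ha1 := (ha n).2
    have hb0 := (hb n).1; have hb1 := (hb n).2
    have hc0 := (hc n).1; have hc1 := (hc n).2
    have hd0 := (hd n).1; have hd1 := (hd n).2
    have he0 := (he n).1; have he1 := (he n).2
    have hal0 := (hal n).1; have hal1 := (hal n).2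
    have hbt0 := (hbt n).1; have hbt1 := (hbt n).2
    have hgm0 := (hgm n).1; have hgm1 := (hgm n).2
    have hxnn : (0:ℝ) ≤ ‖x n - p‖ := norm_nonneg _
    -- w estimate
    have hz' : ‖z n - p‖ ≤ ‖x n - p‖ := key1 (x n) hxn _ (hz n)
    have hw' : ‖w n - p‖ ≤ ‖x n - p‖ + b n * M := by
      have hN := norm3 p (x n) (z n) (s n) (t1 := 1 - a n - b n) (t2 := a n) (t3 := b n)
        (by linarith [hab n]) ha0 hb0 (by ring)
      rw [← hw n] at hN
      have f1 : a n * ‖z n - p‖ ≤ a n * ‖x n - p‖ := by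
        exact mul_le_mul_of_nonneg_left hz' ha0
      have f2 : b n * ‖s n - p‖ ≤ b n * M := mul_le_mul_of_nonneg_left (hsM n) hb0
      nlinarith [mul_nonneg hb0 hxnn]
    -- y estimate
    have hu' : ‖u n - p‖ ≤ ‖x n - p‖ + b n * M := (key2 (w n) hwn _ (hu n)).trans hw'
    have hu2' : ‖u2 n - p‖ ≤ ‖x n - p‖ := key1 (x n) hxn _ (hu2 n)
    have hy' : ‖y n - p‖ ≤ ‖x n - p‖ + M * (b n + e n) := by
      have hN := norm4 p (x n) (u n) (u2 n) (s2 n) (t1 := 1 - c n - d n - e n)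
        (t2 := c n) (t3 := d n) (t4 := e n)
        (by linarith [hcde n]) hc0 hd0 he0 (by ring)
      rw [← hy n] at hN
      have f1 : c n * ‖u n - p‖ ≤ c n * (‖x n - p‖ + b n * M) :=
        mul_le_mul_of_nonneg_left hu' hc0
      have f2 : d n * ‖u2 n - p‖ ≤ d n * ‖x n - p‖ := mul_le_mul_of_nonneg_left hu2' hd0
      have f3 : e n * ‖s2 n - p‖ ≤ e n * M := mul_le_mul_of_nonneg_left (hs2M n) he0
      nlinarith [mul_nonneg he0 hxnn, mul_nonneg (mul_nonneg hb0 hM0) (sub_nonneg.2 hc1)]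
    -- x estimate
    have hv' : ‖v n - p‖ ≤ ‖x n - p‖ + M * (b n + e n) := (key3 (y n) hyn _ (hv n)).trans hy'
    have hv2' : ‖v2 n - p‖ ≤ ‖x n - p‖ + b n * M := (key2 (w n) hwn _ (hv2 n)).trans hw'
    have hN := norm4 p (x n) (v n) (v2 n) (s3 n) (t1 := 1 - al n - bt n - gm n)
      (t2 := al n) (t3 := bt n) (t4 := gm n)
      (by linarith [habg n]) hal0 hbt0 hgm0 (by ring)
    rw [← hx n] at hN
    have f1 : al n * ‖v n - p‖ ≤ al n * (‖x n - p‖ + M * (b n + e n)) :=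
      mul_le_mul_of_nonneg_left hv' hal0
    have f2 : bt n * ‖v2 n - p‖ ≤ bt n * (‖x n - p‖ + b n * M) :=
      mul_le_mul_of_nonneg_left hv2' hbt0
    have f3 : gm n * ‖s3 n - p‖ ≤ gm n * M := mul_le_mul_of_nonneg_left (hs3M n) hgm0
    have hbM : 0 ≤ b n * M := mul_nonneg hb0 hM0
    have heM : 0 ≤ e n * M := mul_nonneg he0 hM0
    simp only [hεs]
    nlinarith [mul_nonneg hgm0 hxnn, mul_nonneg hbM (sub_nonneg.2 hal1),
      mul_nonneg heM (sub_nonneg.2 hal1), mul_nonneg hbM (sub_nonneg.2 hbt1)]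
  exact limit_of_quasi (fun n => ‖x n - p‖) εs (fun n => norm_nonneg _) hεsum hε0 hrec
end

section
/- Let E be a nonempty subset of a Banach space X and let T : E → P(E) satisfy condition (C). If {x_k} is a sequence in E converging strongly to some w ∈ E with lim_{k→∞} dist(x_k, T(x_k)) = 0, then dist(w, T(w)) = 0; in particular, if T(w) is closed then w is a fixed point of T. -/
open Metric Bornology Filter

/-- If `T : E → P(E)` satisfies condition (C) and `x_k → w` in `E` with
`dist(x_k, T x_k) → 0`, then `dist(w, T w) = 0`; in particular if `T w` is
closed then `w` is a fixed point of `T`. -/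
theorem condition_C_demiclosedness
    {X : Type*} [NormedAddCommGroup X] [NormedSpace ℝ X] [CompleteSpace X]
    (E : Set X) (hE : E.Nonempty) (T : X → Set X)
    (hT : ∀ x ∈ E, (T x).Nonempty ∧ IsBounded (T x) ∧ T x ⊆ E ∧
      ∀ p : X, ∃ q ∈ T x, ‖p - q‖ = infDist p (T x))
    (hC : ∀ x ∈ E, ∀ y ∈ E,
      (1 / 2) * infDist x (T x) ≤ ‖x - y‖ →
        hausdorffDist (T x) (T y) ≤ ‖x - y‖)
    (x : ℕ → X) (hxE : ∀ k, x k ∈ E) (w : X) (hwE : w ∈ E)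
    (hxw : Tendsto x atTop (nhds w))
    (hdist : Tendsto (fun k => infDist (x k) (T (x k))) atTop (nhds 0)) :
    infDist w (T w) = 0 ∧ (IsClosed (T w) → w ∈ T w) := by
  -- finiteness of Hausdorff edistances between images
  have hfin : ∀ a ∈ E, ∀ b ∈ E, EMetric.hausdorffEdist (T a) (T b) ≠ ⊤ := by
    intro a ha b hb
    exact Metric.hausdorffEdist_ne_top_of_nonempty_of_bounded (hT a ha).1 (hT b hb).1
      (hT a ha).2.1 (hT b hb).2.1
  -- Suzuki-type key lemma
  have key : ∀ a ∈ E, ∀ b ∈ E, infDist a (T b) ≤ 3 * infDist a (T a) + ‖a - b‖ := by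
    intro a ha b hb
    set d := infDist a (T a) with hd
    have hd0 : 0 ≤ d := infDist_nonneg
    by_cases h : (1 / 2) * d ≤ ‖a - b‖
    · have hH := hC a ha b hb h
      have h1 : infDist a (T b) ≤ infDist a (T a) + hausdorffDist (T a) (T b) :=
        infDist_le_infDist_add_hausdorffDist (hfin a ha b hb)
      nlinarith [hausdorffDist_nonneg (s := T a) (t := T b)]
    · push_neg at h
      obtain ⟨z, hzT, hz⟩ := (hT a ha).2.2.2 a
      have hzE : z ∈ E := (hT a ha).2.2.1 hzT
      have hz' : ‖a - z‖ = d := hz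
      have hH1 : hausdorffDist (T a) (T z) ≤ ‖a - z‖ := by
        refine hC a ha z hzE ?_
        rw [hz']; nlinarith
      have hzTz : infDist z (T z) ≤ d := by
        have h1 : infDist z (T z) ≤ infDist z (T a) + hausdorffDist (T a) (T z) :=
          infDist_le_infDist_add_hausdorffDist (hfin a ha z hzE)
        rw [infDist_zero_of_mem hzT] at h1
        rw [hz'] at hH1
        linarith
      have hzb : d - ‖a - b‖ ≤ ‖z - b‖ := by
        have := norm_sub_le (a - b) (a - z)  -- not quite; use triangle
        have h2 : ‖a - z‖ ≤ ‖a - b‖ + ‖b - z‖ := by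
          have := norm_add_le (a - b) (b - z)
          simpa using this
        rw [hz'] at h2
        have : ‖b - z‖ = ‖z - b‖ := norm_sub_rev _ _
        linarith
      have hH2 : hausdorffDist (T z) (T b) ≤ ‖z - b‖ := by
        refine hC z hzE b hb ?_
        nlinarith
      have h1 : infDist a (T b) ≤ infDist a (T z) + hausdorffDist (T z) (T b) :=
        infDist_le_infDist_add_hausdorffDist (hfin z hzE b hb)
      have h2 : infDist a (T z) ≤ infDist a (T a) + hausdorffDist (T a) (T z) :=
        infDist_le_infDist_add_hausdorffDist (hfin a ha z hzE)
      have h3 : ‖z - b‖ ≤ ‖z - a‖ + ‖a - b‖ := by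
        have := norm_add_le (z - a) (a - b); simpa using this
      have h4 : ‖z - a‖ = d := by rw [norm_sub_rev]; exact hz'
      rw [hz'] at hH1
      nlinarith
  -- main argument
  have hbound : ∀ k, infDist w (T w) ≤
      dist w (x k) + (3 * infDist (x k) (T (x k)) + ‖x k - w‖) := by
    intro k
    have h1 : infDist w (T w) ≤ infDist (x k) (T w) + dist w (x k) :=
      infDist_le_infDist_add_dist
    have h2 := key (x k) (hxE k) w hwE
    linarith
  have hlim : Tendsto (fun k => dist w (x k) +
      (3 * infDist (x k) (T (x k)) + ‖x k - w‖)) atTop (nhds 0) := by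
    have h1 : Tendsto (fun k => dist w (x k)) atTop (nhds 0) := by
      have := tendsto_iff_dist_tendsto_zero.1 hxw
      simpa [dist_comm] using this
    have h2 : Tendsto (fun k => ‖x k - w‖) atTop (nhds 0) := by
      have := tendsto_iff_dist_tendsto_zero.1 hxw
      simpa [dist_eq_norm] using this
    have := h1.add ((hdist.const_mul 3).add h2)
    simpa using this
  have hle : infDist w (T w) ≤ 0 :=
    le_of_tendsto_of_tendsto' tendsto_const_nhds hlim hbound
  have heq : infDist w (T w) = 0 := le_antisymm hle infDist_nonneg
  refine ⟨heq, fun hcl => ?_⟩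
  exact (hcl.mem_iff_infDist_zero (hT w hwE).1).2 heq
end

section
/- Let E be a nonempty subset of a Banach space X and let T : E → P(E) be a multivalued mapping such that P_T satisfies condition (C), where P_T(x) = {y ∈ T(x) : ‖x − y‖ = dist(x, T(x))}. Then for every fixed point p of T: P_T(p) = {p}, and for every x ∈ E and every z ∈ P_T(x), ‖z − p‖ ≤ ‖x − p‖. -/
open Metric Bornology

/-- For a multivalued mapping `T`, `proxSet T x` is the set
`P_T(x) = {y ∈ Tx : ‖x - y‖ = dist(x, Tx)}`. -/
def proxSet {X : Type*} [NormedAddCommGroup X] (T : X → Set X) (x : X) : Set X :=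
  {y ∈ T x | ‖x - y‖ = Metric.infDist x (T x)}

/-- If `T : E → P(E)` is such that `P_T` satisfies condition (C), then for
every fixed point `p` of `T` we have `P_T(p) = {p}` and every `z ∈ P_T(x)`
satisfies `‖z - p‖ ≤ ‖x - p‖`. -/
theorem proxSet_quasi_nonexpansive
    {X : Type*} [NormedAddCommGroup X] [NormedSpace ℝ X] [CompleteSpace X]
    (E : Set X) (hE : E.Nonempty) (T : X → Set X)
    (hT : ∀ x ∈ E, (T x).Nonempty ∧ IsBounded (T x) ∧ T x ⊆ E ∧
      ∀ p : X, ∃ q ∈ T x, ‖p - q‖ = infDist p (T x))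
    (hC : ∀ x ∈ E, ∀ y ∈ E,
      (1 / 2) * infDist x (proxSet T x) ≤ ‖x - y‖ →
        hausdorffDist (proxSet T x) (proxSet T y) ≤ ‖x - y‖) :
    ∀ p ∈ E, p ∈ T p →
      proxSet T p = {p} ∧ ∀ x ∈ E, ∀ z ∈ proxSet T x, ‖z - p‖ ≤ ‖x - p‖ := by
  intro p hp hpT
  have hinf0 : infDist p (T p) = 0 := infDist_zero_of_mem hpT
  have hfix : proxSet T p = {p} := by
    ext y
    simp only [proxSet, Set.mem_setOf_eq, Set.mem_singleton_iff, hinf0]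
    constructor
    · rintro ⟨-, hy⟩
      have := norm_sub_eq_zero_iff.mp hy
      exact this.symm
    · rintro rfl
      exact ⟨hpT, by simp⟩
  refine ⟨hfix, ?_⟩
  intro x hx z hz
  obtain ⟨hTne, hTbd, hTsub, hprox⟩ := hT x hx
  obtain ⟨q, hq, hq2⟩ := hprox x
  have hne : (proxSet T x).Nonempty := ⟨q, hq, hq2⟩
  have hbd : IsBounded (proxSet T x) := hTbd.subset (Set.sep_subset _ _)
  have hcond : (1 / 2) * infDist p (proxSet T p) ≤ ‖p - x‖ := by
    rw [hfix, infDist_singleton, dist_self]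
    simp [norm_nonneg]
  have hH : hausdorffDist (proxSet T p) (proxSet T x) ≤ ‖p - x‖ := hC p hp x hx hcond
  have hET : EMetric.hausdorffEdist (proxSet T x) (proxSet T p) ≠ ⊤ := by
    rw [hfix]
    exact hausdorffEdist_ne_top_of_nonempty_of_bounded hne ⟨p, rfl⟩ hbd isBounded_singleton
  have h1 : infDist z (proxSet T p) ≤ hausdorffDist (proxSet T x) (proxSet T p) :=
    infDist_le_hausdorffDist_of_mem hz hET
  rw [hausdorffDist_comm] at h1
  have h2 := h1.trans hH
  rw [hfix, infDist_singleton] at h2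
  rw [dist_eq_norm] at h2
  calc ‖z - p‖ ≤ ‖p - x‖ := h2
    _ = ‖x - p‖ := norm_sub_rev _ _
end
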